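/- arXiv:1203.0625 — 7 statements merged into one kernel-verified Lean document; each statement's English description precedes it below -/
import Mathlib

section
/- Let 𝔤 be so(3) with basis e₁, e₂, e₃ and brackets [e₁,e₂] = e₃, [e₂,e₃] = e₁, [e₃,e₁] = e₂. Then every one-dimensional subalgebra of 𝔤 is the image of span{e₁} under some inner automorphism of 𝔤 (i.e., under a composition of maps e^{t·ad(e₁)} and e^{s·ad(e₃)}). -/
open Matrix

open NormedSpace in

set_option maxHeartbeats 1000000 in
private lemma rodrigues (A : Matrix (Fin 3) (Fin 3) ℝ) (h : A * A * A = -A) (s : ℝ) :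
    exp (s • A) = 1 + Real.sin s • A + (1 - Real.cos s) • (A * A) := by
  have hodd : ∀ k : ℕ, A ^ (2 * k + 1) = ((-1 : ℝ) ^ k) • A := by
    intro k
    induction k with
    | zero => simp
    | succ n ih =>
        have h2 : 2 * (n + 1) + 1 = (2 * n + 1) + 2 := by ring
        rw [h2, pow_add, ih, sq, smul_mul_assoc, ← mul_assoc, h]
        simp [pow_succ]
  have heven : ∀ k : ℕ, A ^ (2 * k + 2) = ((-1 : ℝ) ^ k) • (A * A) := by
    intro k
    have h2 : 2 * k + 2 = (2 * k + 1) + 1 := by ring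
    rw [h2, pow_succ, hodd k, smul_mul_assoc]
  rw [exp_eq_tsum ℝ]
  refine HasSum.tsum_eq ?_
  have hO : HasSum (fun k : ℕ => (((2 * k + 1).factorial : ℝ))⁻¹ • (s • A) ^ (2 * k + 1))
      (Real.sin s • A) := by
    convert (Real.hasSum_sin s).smul_const A using 1
    funext k
    rw [smul_pow, hodd, smul_smul, smul_smul]
    congr 1
    have : ((2 * k + 1).factorial : ℝ) ≠ 0 := Nat.cast_ne_zero.mpr (2 * k + 1).factorial_ne_zero
    field_simp
  have hE : HasSum (fun k : ℕ => (((2 * k).factorial : ℝ))⁻¹ • (s • A) ^ (2 * k))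
      (1 + (1 - Real.cos s) • (A * A)) := by
    have h1 : HasSum
        (fun k : ℕ => -(((-1 : ℝ) ^ k * s ^ (2 * k) / (2 * k).factorial) • (A * A)))
        (-(Real.cos s • (A * A))) := ((Real.hasSum_cos s).smul_const (A * A)).neg
    have h2 : HasSum (fun k : ℕ => if k = 0 then (1 + A * A : Matrix (Fin 3) (Fin 3) ℝ) else 0)
        (1 + A * A) := hasSum_ite_eq 0 _
    convert h1.add h2 using 1
    · funext k
      rcases Nat.eq_zero_or_pos k with rfl | hk
      · norm_num
      · obtain ⟨m, rfl⟩ : ∃ m, k = m + 1 := ⟨k - 1, by omega⟩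
        rw [if_neg (by omega), add_zero]
        have h4 : 2 * (m + 1) = 2 * m + 2 := by ring
        rw [h4, smul_pow, heven, smul_smul, smul_smul, ← neg_smul]
        congr 1
        have : ((2 * m + 2).factorial : ℝ) ≠ 0 :=
          Nat.cast_ne_zero.mpr (2 * m + 2).factorial_ne_zero
        rw [div_eq_mul_inv]
        ring
    · rw [sub_smul, one_smul, sub_eq_neg_add, ← add_assoc, add_comm 1, add_assoc, add_comm 1]
  have key := HasSum.even_add_odd
    (f := fun n : ℕ => ((n.factorial : ℝ))⁻¹ • (s • A) ^ n) hE hO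
  rw [add_assoc, add_comm (Real.sin s • A), ← add_assoc]
  exact key

set_option maxHeartbeats 1000000 in
/-- In so(3), realized on ℝ³ with ad e₁ and ad e₃ given by the matrices `adE1`,
`adE3` below (basis e₁,e₂,e₃ with brackets [e₁,e₂]=e₃, [e₂,e₃]=e₁, [e₃,e₁]=e₂),
every one-dimensional subalgebra (i.e. every line, each line being automatically
a subalgebra) is the image of span{e₁} under an inner automorphism of the form
e^{t·ad e₁} ∘ e^{s·ad e₃}. -/
theorem so3_lines_conjugate
    (adE1 adE3 : Matrix (Fin 3) (Fin 3) ℝ)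
    (hE1 : adE1 = !![0, 0, 0; 0, 0, -1; 0, 1, 0])
    (hE3 : adE3 = !![0, -1, 0; 1, 0, 0; 0, 0, 0]) :
    ∀ p : Submodule ℝ (Fin 3 → ℝ), Module.finrank ℝ p = 1 →
      ∃ t s : ℝ,
        Submodule.map
          ((NormedSpace.exp (t • adE1)).mulVecLin.comp
            (NormedSpace.exp (s • adE3)).mulVecLin)
          (Submodule.span ℝ {(![1, 0, 0] : Fin 3 → ℝ)}) = p := by
  intro p hp
  obtain ⟨v, hv0, hvgen⟩ := (finrank_eq_one_iff' (K := ℝ) (V := p)).mp hp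
  set a : ℝ := (v : Fin 3 → ℝ) 0 with ha
  set b : ℝ := (v : Fin 3 → ℝ) 1 with hb
  set c : ℝ := (v : Fin 3 → ℝ) 2 with hc
  have hsum : 0 < a ^ 2 + b ^ 2 + c ^ 2 := by
    rcases lt_or_eq_of_le (by positivity : (0:ℝ) ≤ a ^ 2 + b ^ 2 + c ^ 2) with h | h
    · exact h
    · exfalso
      apply hv0
      apply Subtype.ext
      funext i
      fin_cases i
      · show (v : Fin 3 → ℝ) 0 = 0; nlinarith [sq_nonneg a, sq_nonneg b, sq_nonneg c]
      · show (v : Fin 3 → ℝ) 1 = 0; nlinarith [sq_nonneg a, sq_nonneg b, sq_nonneg c]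
      · show (v : Fin 3 → ℝ) 2 = 0; nlinarith [sq_nonneg a, sq_nonneg b, sq_nonneg c]
  set r : ℝ := Real.sqrt (a ^ 2 + b ^ 2 + c ^ 2) with hrdef
  have hr : 0 < r := Real.sqrt_pos.mpr hsum
  have hr2 : r ^ 2 = a ^ 2 + b ^ 2 + c ^ 2 := Real.sq_sqrt hsum.le
  set ρ : ℝ := Real.sqrt (b ^ 2 + c ^ 2) with hρdef
  have hρ0 : 0 ≤ ρ := Real.sqrt_nonneg _
  have hρ2 : ρ ^ 2 = b ^ 2 + c ^ 2 := Real.sq_sqrt (by positivity)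
  set s : ℝ := Real.arccos (a / r) with hsdef
  have hcoss : Real.cos s = a / r := by
    apply Real.cos_arccos
    · rw [le_div_iff₀ hr]
      nlinarith [sq_nonneg b, sq_nonneg c, sq_nonneg (r + a)]
    · rw [div_le_iff₀ hr]
      nlinarith [sq_nonneg b, sq_nonneg c, sq_nonneg (r - a)]
  have hsins : Real.sin s = ρ / r := by
    rw [hsdef, Real.sin_arccos]
    have h1 : 1 - (a / r) ^ 2 = (b ^ 2 + c ^ 2) / r ^ 2 := by
      field_simp
      linarith [hr2]
    rw [h1, Real.sqrt_div (by positivity), Real.sqrt_sq hr.le]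
  set z : ℂ := ⟨b, c⟩ with hzdef
  set t : ℝ := Complex.arg z with htdef
  have habs : ‖z‖ = ρ := by
    rw [hzdef, Complex.norm_def, Complex.normSq_mk, hρdef]
    ring_nf
  have hsint : Real.sin t = c / ρ := by
    rw [htdef, Complex.sin_arg, habs, hzdef]
  refine ⟨t, s, ?_⟩
  have e1cube : adE1 * adE1 * adE1 = -adE1 := by
    subst hE1
    ext i j
    fin_cases i <;> fin_cases j <;> simp [Matrix.mul_apply, Fin.sum_univ_three, Matrix.vecHead, Matrix.vecTail]
  have e3cube : adE3 * adE3 * adE3 = -adE3 := by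
    subst hE3
    ext i j
    fin_cases i <;> fin_cases j <;> simp [Matrix.mul_apply, Fin.sum_univ_three, Matrix.vecHead, Matrix.vecTail]
  rw [rodrigues adE1 e1cube t, rodrigues adE3 e3cube s]
  have himg : ((1 + Real.sin t • adE1 + (1 - Real.cos t) • (adE1 * adE1)).mulVecLin.comp
      (1 + Real.sin s • adE3 + (1 - Real.cos s) • (adE3 * adE3)).mulVecLin)
      (![1, 0, 0] : Fin 3 → ℝ)
      = ![Real.cos s, Real.sin s * Real.cos t, Real.sin s * Real.sin t] := by
    subst hE1 hE3
    funext i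
    fin_cases i <;>
      simp [Matrix.mulVecLin_apply, Matrix.mulVec, dotProduct, Fin.sum_univ_three,
        Matrix.mul_apply, Matrix.one_apply, Matrix.vecHead, Matrix.vecTail] <;> ring
  rw [Submodule.map_span, Set.image_singleton, himg]
  have hwv : ![Real.cos s, Real.sin s * Real.cos t, Real.sin s * Real.sin t]
      = r⁻¹ • (v : Fin 3 → ℝ) := by
    funext i
    fin_cases i
    · show Real.cos s = r⁻¹ * a
      rw [hcoss, div_eq_inv_mul]
    · show Real.sin s * Real.cos t = r⁻¹ * b
      rcases eq_or_ne z 0 with hz | hz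
      · have hb0 : b = 0 := by
          have := congrArg Complex.re hz; simpa [hzdef] using this
        have hρz : ρ = 0 := by rw [← habs, hz, norm_zero]
        rw [hsins, hρz, hb0]
        simp
      · have hρne : ρ ≠ 0 := by rw [← habs]; exact norm_ne_zero_iff.mpr hz
        rw [hsins, htdef, Complex.cos_arg hz, habs, hzdef]
        show ρ / r * (b / ρ) = r⁻¹ * b
        field_simp
    · show Real.sin s * Real.sin t = r⁻¹ * c
      rcases eq_or_ne ρ 0 with hρz | hρne
      · have hc0 : c = 0 := by nlinarith [hρ2]
        rw [hsint, hρz, hc0]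
        simp
      · rw [hsins, hsint]
        field_simp
  rw [hwv, Submodule.span_singleton_smul_eq (IsUnit.mk0 _ (inv_ne_zero hr.ne')) _]
  apply le_antisymm
  · rw [Submodule.span_le, Set.singleton_subset_iff]
    exact v.2
  · intro w hw'
    obtain ⟨d, hd⟩ := hvgen ⟨w, hw'⟩
    exact Submodule.mem_span_singleton.mpr ⟨d, congrArg Subtype.val hd⟩
end

section
/- Let 𝔤 be the Lie algebra L(4,1) with nonzero brackets [e₂,e₄] = e₁, [e₃,e₄] = e₂, and let 𝔥 = span{e₄}, 𝔪 = span{−e₃, e₂, e₁}. Then the space of symmetric bilinear forms B on 𝔪 satisfying B([e₄,u],v) + B(u,[e₄,v]) = 0 for all u,v ∈ 𝔪 is two-dimensional, spanned (in the basis m₁ = −e₃, m₂ = e₂, m₃ = e₁) by the forms with matrices D₁ = diag(1,0,0) and N = the matrix with 1 in entries (1,3),(3,1),(2,2) and 0 elsewhere. -/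
open Matrix

set_option maxHeartbeats 1600000 in
/-- In L(4,1) (nonzero brackets [e₂,e₄]=e₁, [e₃,e₄]=e₂), for 𝔥 = span{e₄} and the
complement 𝔪 with ordered basis m = (−e₃, e₂, e₁), the ad𝔥-invariant symmetric
bilinear forms on 𝔪 — given in coordinates by symmetric matrices M with
Aᵀ·M + M·A = 0, where A is the matrix of ad(e₄)|𝔪 in the basis m — form a
two-dimensional space spanned by D₁ = diag(1,0,0) and N (ones in entries
(1,3),(3,1),(2,2)). -/
theorem L41_invariant_quadratic_forms (L : Type*) [LieRing L] [LieAlgebra ℝ L]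
    (e : Module.Basis (Fin 4) ℝ L)
    (h24 : ⁅e 1, e 3⁆ = e 0) (h34 : ⁅e 2, e 3⁆ = e 1)
    (h12 : ⁅e 0, e 1⁆ = 0) (h13 : ⁅e 0, e 2⁆ = 0)
    (h14 : ⁅e 0, e 3⁆ = 0) (h23 : ⁅e 1, e 2⁆ = 0)
    (m : Fin 3 → L) (hm : m = ![-(e 2), e 1, e 0])
    (A : Matrix (Fin 3) (Fin 3) ℝ)
    (hA : ∀ i, ⁅e 3, m i⁆ = ∑ j, A j i • m j) :
    {M : Matrix (Fin 3) (Fin 3) ℝ | M.IsSymm ∧ Aᵀ * M + M * A = 0}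
      = (Submodule.span ℝ
          ({!![1,0,0;0,0,0;0,0,0], !![0,0,1;0,1,0;1,0,0]} :
            Set (Matrix (Fin 3) (Fin 3) ℝ)) : Set (Matrix (Fin 3) (Fin 3) ℝ)) ∧
    Module.finrank ℝ (Submodule.span ℝ
          ({!![1,0,0;0,0,0;0,0,0], !![0,0,1;0,1,0;1,0,0]} :
            Set (Matrix (Fin 3) (Fin 3) ℝ))) = 2 := by
  -- Step 1: determine A explicitly.
  have hAeq : A = !![0,0,0;1,0,0;0,-1,0] := by
    subst hm
    have k1 : ⁅e 3, e 1⁆ = -(e 0) := by rw [← h24, ← lie_skew]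
    have k2 : ⁅e 3, e 0⁆ = (0 : L) := by rw [← lie_skew, h14, neg_zero]
    have h0 := hA 0
    have h1 := hA 1
    have h2 := hA 2
    simp [Fin.sum_univ_three] at h0 h1 h2
    rw [h34] at h0
    rw [k1] at h1
    rw [k2] at h2
    have c0 := fun k => congrArg (fun x => e.repr x k) h0
    have c1 := fun k => congrArg (fun x => e.repr x k) h1
    have c2 := fun k => congrArg (fun x => e.repr x k) h2
    simp [Module.Basis.repr_self, Finsupp.single_apply] at c0 c1 c2
    have d00 := c0 0; have d01 := c0 1; have d02 := c0 2
    have d10 := c1 0; have d11 := c1 1; have d12 := c1 2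
    have d20 := c2 0; have d21 := c2 1; have d22 := c2 2
    norm_num [Fin.ext_iff] at d00 d01 d02 d10 d11 d12 d20 d21 d22
    ext i j
    fin_cases i <;> fin_cases j <;>
      simp [Matrix.vecHead, Matrix.vecTail] <;>
      linarith
  subst hAeq
  constructor
  · -- the set equality
    ext M
    simp only [Set.mem_setOf_eq, SetLike.mem_coe, Submodule.mem_span_pair]
    constructor
    · rintro ⟨hsym, heq⟩
      have hs := fun i j => hsym.apply i j
      rw [show (!![0,0,0;1,0,0;0,-1,0] : Matrix (Fin 3) (Fin 3) ℝ)ᵀ = !![0,1,0;0,0,-1;0,0,0] from by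
        ext i j; fin_cases i <;> fin_cases j <;> simp [Matrix.vecHead, Matrix.vecTail]] at heq
      have e00 := congrFun (congrFun heq 0) 0
      have e01 := congrFun (congrFun heq 0) 1
      have e02 := congrFun (congrFun heq 0) 2
      have e10 := congrFun (congrFun heq 1) 0
      have e11 := congrFun (congrFun heq 1) 1
      have e12 := congrFun (congrFun heq 1) 2
      have e20 := congrFun (congrFun heq 2) 0
      have e21 := congrFun (congrFun heq 2) 1
      have e22 := congrFun (congrFun heq 2) 2
      simp only [Matrix.add_apply, Matrix.mul_apply, Fin.sum_univ_three,
        Matrix.zero_apply] at e00 e01 e02 e10 e11 e12 e20 e21 e22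
      norm_num [Matrix.vecHead, Matrix.vecTail, Matrix.cons_val_two, Matrix.cons_val_one, Matrix.cons_val_zero] at e00 e01 e02 e10 e11 e12 e20 e21 e22
      refine ⟨M 0 0, M 0 2, ?_⟩
      ext i j
      fin_cases i <;> fin_cases j <;>
        simp [Matrix.vecHead, Matrix.vecTail] <;>
        linarith [e00, e01, e02, e10, e11, e12, e20, e21, e22,
          hs 0 1, hs 0 2, hs 1 2, hs 1 0, hs 2 0, hs 2 1]
    · rintro ⟨a, b, rfl⟩
      constructor
      · unfold Matrix.IsSymm
        ext i j
        fin_cases i <;> fin_cases j <;> simp [Matrix.vecHead, Matrix.vecTail]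
      · ext i j
        fin_cases i <;> fin_cases j <;>
          simp [Matrix.mul_apply, Fin.sum_univ_three, Matrix.vecHead, Matrix.vecTail] <;> ring
  · -- finrank = 2
    have hli : LinearIndependent ℝ
        ![(!![1,0,0;0,0,0;0,0,0] : Matrix (Fin 3) (Fin 3) ℝ), !![0,0,1;0,1,0;1,0,0]] := by
      rw [LinearIndependent.pair_iff]
      intro s t hst
      have h1 := congrFun (congrFun hst 0) 0
      have h2 := congrFun (congrFun hst 0) 2
      simp at h1 h2
      exact ⟨h1, h2⟩
    have hrange : ({!![1,0,0;0,0,0;0,0,0], !![0,0,1;0,1,0;1,0,0]} : Set (Matrix (Fin 3) (Fin 3) ℝ))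
        = Set.range ![!![1,0,0;0,0,0;0,0,0], !![0,0,1;0,1,0;1,0,0]] := by
      ext x
      simp [Fin.exists_fin_two, or_comm]
    rw [hrange, finrank_span_eq_card hli]
    simp
end

section
/- Let 𝔤 be the Lie algebra L(4,11) with basis e₁,...,e₄ and nonzero brackets [e₂,e₃] = e₁, [e₂,e₄] = −e₃, [e₃,e₄] = e₂. Then the function I(v) = 2y¹y⁴ + (y²)² + (y³)² for v = Σ yⁱeᵢ is invariant under the inner automorphisms e^{t·ad(e₂)}, e^{t·ad(e₃)}, and e^{t·ad(e₄)} of 𝔤. -/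
open Matrix

noncomputable section

private def Qm : Matrix (Fin 4) (Fin 4) ℝ := !![0,0,0,1; 0,1,0,0; 0,0,1,0; 1,0,0,0]

private lemma Qm_mul_Qm : Qm * Qm = 1 := by
  ext i j
  fin_cases i <;> fin_cases j <;>
    simp only [Qm, Matrix.mul_apply, Fin.sum_univ_four, Matrix.of_apply, Matrix.cons_val_zero,
      Matrix.cons_val_one, Matrix.head_cons, Matrix.cons_val_two, Matrix.tail_cons,
      Matrix.cons_val_three, Matrix.head_fin_const, Matrix.cons_val, Matrix.one_apply, Fin.mk.injEq] <;>
    norm_num <;> simp only [Matrix.cons_val] <;> norm_num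

private lemma key (A : Matrix (Fin 4) (Fin 4) ℝ) (h : Aᵀ * Qm = -(Qm * A)) :
    (NormedSpace.exp A)ᵀ * Qm * NormedSpace.exp A = Qm := by
  have hA : Aᵀ = Qm * -A * Qm := by
    have h' : Aᵀ * Qm * Qm = -(Qm * A) * Qm := by rw [h]
    simpa [Matrix.mul_assoc, Qm_mul_Qm, Matrix.neg_mul] using h'
  have hU : IsUnit Qm := ⟨⟨Qm, Qm, Qm_mul_Qm, Qm_mul_Qm⟩, rfl⟩
  have hQinv : Qm⁻¹ = Qm := Matrix.inv_eq_right_inv Qm_mul_Qm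
  have hexpT : NormedSpace.exp Aᵀ = Qm * NormedSpace.exp (-A) * Qm := by
    rw [hA]
    have := Matrix.exp_conj Qm (-A) hU
    rw [hQinv] at this
    exact this
  have h1 : NormedSpace.exp (-A) * NormedSpace.exp A = 1 := by
    rw [← Matrix.exp_add_of_commute (-A) A (Commute.neg_left (Commute.refl A))]
    simp [NormedSpace.exp_zero]
  calc (NormedSpace.exp A)ᵀ * Qm * NormedSpace.exp A
      = Qm * NormedSpace.exp (-A) * Qm * Qm * NormedSpace.exp A := by
        rw [← Matrix.exp_transpose, hexpT]
    _ = Qm * NormedSpace.exp (-A) * (Qm * Qm) * NormedSpace.exp A := by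
        rw [Matrix.mul_assoc (Qm * NormedSpace.exp (-A))]
    _ = Qm * (NormedSpace.exp (-A) * NormedSpace.exp A) := by
        rw [Qm_mul_Qm, Matrix.mul_one, Matrix.mul_assoc]
    _ = Qm := by rw [h1, Matrix.mul_one]

set_option maxHeartbeats 1000000 in
private lemma Ikey (I : (Fin 4 → ℝ) → ℝ)
    (hI : ∀ y : Fin 4 → ℝ, I y = 2 * y 0 * y 3 + (y 1) ^ 2 + (y 2) ^ 2)
    (M : Matrix (Fin 4) (Fin 4) ℝ) (h : Mᵀ * Qm * M = Qm) (v : Fin 4 → ℝ) :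
    I (M.mulVec v) = I v := by
  have h2 := congrArg (fun N => v ⬝ᵥ N.mulVec v) h
  simp only [Matrix.mulVec, dotProduct, Fin.sum_univ_four, Matrix.mul_apply,
    Matrix.transpose_apply, Qm, Matrix.of_apply, Matrix.cons_val_zero, Matrix.cons_val_one,
    Matrix.head_cons, Matrix.cons_val_two, Matrix.tail_cons, Matrix.cons_val_three,
    Matrix.head_fin_const] at h2
  rw [hI, hI]
  simp only [Matrix.mulVec, dotProduct, Fin.sum_univ_four]
  nlinarith [h2]

private lemma skew_smul (t : ℝ) (B : Matrix (Fin 4) (Fin 4) ℝ)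
    (h : Bᵀ * Qm = -(Qm * B)) : (t • B)ᵀ * Qm = -(Qm * (t • B)) := by
  rw [Matrix.transpose_smul, Matrix.smul_mul, h, Matrix.mul_smul]
  simp

set_option maxHeartbeats 2000000 in
/-- In L(4,11), with basis e₁,…,e₄ and nonzero brackets [e₂,e₃]=e₁, [e₂,e₄]=−e₃,
[e₃,e₄]=e₂, the adjoint maps ad e₂, ad e₃, ad e₄ are given in this basis by the
matrices `adE2`, `adE3`, `adE4` below.  The function I(v) = 2y¹y⁴ + (y²)² + (y³)²
is invariant under the inner automorphisms e^{t·ad e₂}, e^{t·ad e₃}, e^{t·ad e₄}. -/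
theorem L411_invariant_function
    (adE2 adE3 adE4 : Matrix (Fin 4) (Fin 4) ℝ)
    (hE2 : adE2 = !![0,0,1,0; 0,0,0,0; 0,0,0,-1; 0,0,0,0])
    (hE3 : adE3 = !![0,-1,0,0; 0,0,0,1; 0,0,0,0; 0,0,0,0])
    (hE4 : adE4 = !![0,0,0,0; 0,0,-1,0; 0,1,0,0; 0,0,0,0])
    (I : (Fin 4 → ℝ) → ℝ)
    (hI : ∀ y : Fin 4 → ℝ, I y = 2 * y 0 * y 3 + (y 1) ^ 2 + (y 2) ^ 2) :
    ∀ (t : ℝ) (v : Fin 4 → ℝ),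
      I ((NormedSpace.exp (t • adE2)).mulVec v) = I v ∧
      I ((NormedSpace.exp (t • adE3)).mulVec v) = I v ∧
      I ((NormedSpace.exp (t • adE4)).mulVec v) = I v := by
  intro t v
  refine ⟨?_, ?_, ?_⟩ <;>
  · refine Ikey I hI _ (key _ (skew_smul t _ ?_)) v
    subst hE2 hE3 hE4
    ext i j
    fin_cases i <;> fin_cases j <;>
      norm_num [Qm, Matrix.mul_apply, Fin.sum_univ_four, Matrix.transpose_apply,
        Matrix.vecHead, Matrix.vecTail, Function.comp] <;>
      simp only [Matrix.cons_val] <;> norm_num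

end
end

section
/- Let 𝔤 = sl(2,ℝ) ⊕ ℝ as L(4,−7) with brackets [e₁,e₂] = e₁, [e₁,e₃] = −2e₂, [e₂,e₃] = e₃ and e₄ central, and let h = e₁ + e₄. Then 𝔥 = span{h} is a one-dimensional subalgebra, 𝔪 = span{e₁,e₂,e₃} is an ideal complement of 𝔥, and ad(h)|𝔪 = ad(e₁)|𝔪 is nilpotent with (ad(e₁)|𝔪)³ = 0 and (ad(e₁)|𝔪)² ≠ 0 (null isotropy type). -/
/-- In L(4,−7) = sl(2,ℝ) ⊕ ℝ with brackets [e₁,e₂]=e₁, [e₁,e₃]=−2e₂, [e₂,e₃]=e₃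
and e₄ central, for h = e₁ + e₄: 𝔥 = span{h} is a one-dimensional subalgebra,
𝔪 = span{e₁,e₂,e₃} is an ideal complement of 𝔥, ad(h)|𝔪 = ad(e₁)|𝔪, and this map
is nilpotent with cube zero but square nonzero: null isotropy type. -/
theorem L4neg7_null (L : Type*) [LieRing L] [LieAlgebra ℝ L]
    (e : Module.Basis (Fin 4) ℝ L)
    (h12 : ⁅e 0, e 1⁆ = e 0) (h13 : ⁅e 0, e 2⁆ = (-2 : ℝ) • e 1)
    (h23 : ⁅e 1, e 2⁆ = e 2)
    (h14 : ⁅e 0, e 3⁆ = 0) (h24 : ⁅e 1, e 3⁆ = 0) (h34 : ⁅e 2, e 3⁆ = 0)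
    (h : L) (hh : h = e 0 + e 3)
    (H M : Submodule ℝ L)
    (hH : H = Submodule.span ℝ {h})
    (hM : M = Submodule.span ℝ {e 0, e 1, e 2}) :
    (∀ x ∈ H, ∀ y ∈ H, ⁅x, y⁆ ∈ H) ∧
    H ⊔ M = ⊤ ∧ H ⊓ M = ⊥ ∧
    (∀ x : L, ∀ y ∈ M, ⁅x, y⁆ ∈ M) ∧
    (∀ m ∈ M, ⁅h, m⁆ = ⁅e 0, m⁆) ∧
    (∀ m ∈ M, ⁅e 0, ⁅e 0, ⁅e 0, m⁆⁆⁆ = 0) ∧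
    (∃ m ∈ M, ⁅e 0, ⁅e 0, m⁆⁆ ≠ 0) := by
  -- skew-symmetric versions of the bracket relations
  have h21 : ⁅e 1, e 0⁆ = -e 0 := by rw [← lie_skew, h12]
  have h31 : ⁅e 2, e 0⁆ = -((-2 : ℝ) • e 1) := by rw [← lie_skew, h13]
  have h32 : ⁅e 2, e 1⁆ = -e 2 := by rw [← lie_skew, h23]
  have h41 : ⁅e 3, e 0⁆ = 0 := by rw [← lie_skew, h14, neg_zero]
  have h42 : ⁅e 3, e 1⁆ = 0 := by rw [← lie_skew, h24, neg_zero]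
  have h43 : ⁅e 3, e 2⁆ = 0 := by rw [← lie_skew, h34, neg_zero]
  -- membership of simple combinations in M
  have e0M : e 0 ∈ M := by rw [hM]; exact Submodule.subset_span (by simp)
  have e1M : e 1 ∈ M := by rw [hM]; exact Submodule.subset_span (by simp)
  have e2M : e 2 ∈ M := by rw [hM]; exact Submodule.subset_span (by simp)
  have memM : ∀ a b c : ℝ, a • e 0 + b • e 1 + c • e 2 ∈ M := fun a b c =>
    M.add_mem (M.add_mem (M.smul_mem a e0M) (M.smul_mem b e1M)) (M.smul_mem c e2M)
  -- decomposition of elements of M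
  have decM : ∀ m ∈ M, ∃ a b c : ℝ, m = a • e 0 + b • e 1 + c • e 2 := by
    intro m hm
    rw [hM, show ({e 0, e 1, e 2} : Set L) = insert (e 0) (insert (e 1) {e 2}) from rfl,
      Submodule.mem_span_insert] at hm
    obtain ⟨a, z, hz, rfl⟩ := hm
    rw [Submodule.mem_span_insert] at hz
    obtain ⟨b, w, hw, rfl⟩ := hz
    rw [Submodule.mem_span_singleton] at hw
    obtain ⟨c, rfl⟩ := hw
    exact ⟨a, b, c, by abel⟩
  -- decomposition of arbitrary elements
  have decL : ∀ x : L, ∃ a b c d : ℝ, x = a • e 0 + b • e 1 + c • e 2 + d • e 3 := by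
    intro x
    refine ⟨e.repr x 0, e.repr x 1, e.repr x 2, e.repr x 3, ?_⟩
    have := e.sum_repr x
    rw [Fin.sum_univ_four] at this
    exact this.symm
  refine ⟨?_, ?_, ?_, ?_, ?_, ?_, ?_⟩
  · -- H is a subalgebra
    intro x hx y hy
    rw [hH, Submodule.mem_span_singleton] at hx hy
    obtain ⟨a, rfl⟩ := hx
    obtain ⟨b, rfl⟩ := hy
    simp [lie_smul, smul_lie]
  · -- H ⊔ M = ⊤
    apply le_antisymm le_top
    rw [← e.span_eq]
    apply Submodule.span_le.2
    rintro x ⟨i, rfl⟩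
    have hHm : h ∈ H ⊔ M := Submodule.mem_sup_left (by rw [hH]; exact Submodule.subset_span rfl)
    fin_cases i
    · exact Submodule.mem_sup_right e0M
    · exact Submodule.mem_sup_right e1M
    · exact Submodule.mem_sup_right e2M
    · have h3 : e 3 = h - e 0 := by rw [hh]; abel
      exact show e 3 ∈ (H ⊔ M : Submodule ℝ L) by
        rw [h3]; exact Submodule.sub_mem _ hHm (Submodule.mem_sup_right e0M)
  · -- H ⊓ M = ⊥
    rw [eq_bot_iff]
    intro x hx
    rw [Submodule.mem_inf] at hx
    obtain ⟨hxH, hxM⟩ := hx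
    rw [hH, Submodule.mem_span_singleton] at hxH
    obtain ⟨t, rfl⟩ := hxH
    obtain ⟨a, b, c, hx⟩ := decM _ hxM
    rw [hh, smul_add] at hx
    have h3 := congrArg (fun z => e.repr z 3) hx
    simp only [map_add, map_smul, e.repr_self, Finsupp.smul_single, smul_eq_mul, mul_one,
      Finsupp.add_apply, Finsupp.single_apply] at h3
    have n0 : (0 : Fin 4) ≠ 3 := by decide
    have n1 : (1 : Fin 4) ≠ 3 := by decide
    have n2 : (2 : Fin 4) ≠ 3 := by decide
    rw [if_neg n0, if_neg n1, if_neg n2] at h3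
    have ht : t = 0 := by simpa using h3
    simp [Submodule.mem_bot, hh, ht]
  · -- M is an ideal
    intro x y hy
    obtain ⟨a, b, c, d, rfl⟩ := decL x
    obtain ⟨p, q, r, rfl⟩ := decM y hy
    simp only [lie_add, add_lie, lie_smul, smul_lie, lie_self, h12, h13, h23, h21, h31, h32,
      h41, h42, h43, smul_zero, zero_add, add_zero, smul_neg, smul_smul]
    repeat'
      first
        | exact e0M
        | exact e1M
        | exact e2M
        | apply M.add_mem
        | apply M.neg_mem
        | apply M.smul_mem
  · -- ad h = ad e0 on M
    intro m hm
    obtain ⟨a, b, c, rfl⟩ := decM m hm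
    rw [hh]
    simp [lie_add, add_lie, lie_smul, h14, h24, h34, h41, h42, h43]
  · -- cube is zero
    intro m hm
    obtain ⟨a, b, c, rfl⟩ := decM m hm
    simp [lie_add, lie_smul, h12, h13, lie_self]
  · -- square nonzero
    refine ⟨e 2, e2M, ?_⟩
    rw [h13, lie_smul, h12]
    intro hc
    have := smul_eq_zero.1 hc
    rcases this with hc | hc
    · norm_num at hc
    · exact e.ne_zero 0 hc
end

section
/- Let 𝔤 be the Lie algebra L(4,8) with nonzero brackets [e₂,e₃] = e₁, [e₂,e₄] = e₂, [e₃,e₄] = −e₃. Then the functions I(v) = y²y³ − y¹y⁴ and J(v) = y⁴ (where v = Σ yⁱeᵢ) are invariant under the inner automorphisms e^{t·ad(e₂)} and e^{t·ad(e₃)} of 𝔤. -/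
open Matrix

lemma exp_sq_zero (x : Matrix (Fin 4) (Fin 4) ℝ) (hx : x ^ 2 = 0) :
    NormedSpace.exp x = 1 + x := by
  rw [NormedSpace.exp_eq_tsum ℝ]
  beta_reduce
  rw [tsum_eq_sum (s := Finset.range 2)]
  · simp [Finset.sum_range_succ]
  · intro n hn
    have h2 : 2 ≤ n := by simp at hn; omega
    have : x ^ n = 0 := by
      calc x ^ n = x ^ 2 * x ^ (n - 2) := by rw [← pow_add]; congr 1; omega
      _ = 0 := by rw [hx, zero_mul]
    simp [this]

/-- In L(4,8), with basis e₁,…,e₄ and nonzero brackets [e₂,e₃]=e₁, [e₂,e₄]=e₂,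
[e₃,e₄]=−e₃, the adjoint maps ad e₂ and ad e₃ have the matrices `adE2`, `adE3`
below in this basis.  The functions I(v) = y²y³ − y¹y⁴ and J(v) = y⁴ are
invariant under the inner automorphisms e^{t·ad e₂} and e^{t·ad e₃}. -/
theorem L48_invariants
    (adE2 adE3 : Matrix (Fin 4) (Fin 4) ℝ)
    (hE2 : adE2 = !![0,0,1,0; 0,0,0,1; 0,0,0,0; 0,0,0,0])
    (hE3 : adE3 = !![0,-1,0,0; 0,0,0,0; 0,0,0,-1; 0,0,0,0])
    (I J : (Fin 4 → ℝ) → ℝ)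
    (hI : ∀ y : Fin 4 → ℝ, I y = y 1 * y 2 - y 0 * y 3)
    (hJ : ∀ y : Fin 4 → ℝ, J y = y 3) :
    ∀ (t : ℝ) (v : Fin 4 → ℝ),
      I ((NormedSpace.exp (t • adE2)).mulVec v) = I v ∧
      I ((NormedSpace.exp (t • adE3)).mulVec v) = I v ∧
      J ((NormedSpace.exp (t • adE2)).mulVec v) = J v ∧
      J ((NormedSpace.exp (t • adE3)).mulVec v) = J v := by
  intro t v
  have h2 : (t • adE2) ^ 2 = 0 := by
    have : adE2 ^ 2 = 0 := by
      subst hE2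
      ext i j
      fin_cases i <;> fin_cases j <;>
        simp [pow_two, Matrix.mul_apply, Fin.sum_univ_four, Matrix.vecHead, Matrix.vecTail]
    rw [smul_pow, this, smul_zero]
  have h3 : (t • adE3) ^ 2 = 0 := by
    have : adE3 ^ 2 = 0 := by
      subst hE3
      ext i j
      fin_cases i <;> fin_cases j <;>
        simp [pow_two, Matrix.mul_apply, Fin.sum_univ_four, Matrix.vecHead, Matrix.vecTail]
    rw [smul_pow, this, smul_zero]
  rw [exp_sq_zero _ h2, exp_sq_zero _ h3]
  subst hE2 hE3
  refine ⟨?_, ?_, ?_, ?_⟩ <;>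
    simp [hI, hJ, Matrix.add_mulVec, Matrix.smul_mulVec, Matrix.mulVec,
      dotProduct, Fin.sum_univ_four, Matrix.one_apply, Matrix.vecHead,
      Matrix.vecTail, Function.comp, show (Fin.succ 2 : Fin 4) = 3 from rfl] <;> ring
end

section
/- Let 𝔤 be the Lie algebra L(4,8) with nonzero brackets [e₂,e₃] = e₁, [e₂,e₄] = e₂, [e₃,e₄] = −e₃, and let h = e₂ + e₃, 𝔪 = span{e₄, e₂ − e₃, 2e₁}. Then 𝔥 = span{h} is a subalgebra, 𝔪 is a symmetric complement of 𝔥 ([𝔥,𝔪] ⊆ 𝔪 and [𝔪,𝔪] ⊆ 𝔥), and ad(h)|𝔪 is nilpotent of index exactly 3 (null isotropy). -/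
/-- In L(4,8), with nonzero brackets [e₂,e₃]=e₁, [e₂,e₄]=e₂, [e₃,e₄]=−e₃, for
h = e₂+e₃ and 𝔪 = span{e₄, e₂−e₃, 2e₁}: 𝔥 = span{h} is a subalgebra, 𝔪 is a
symmetric complement of 𝔥 (𝔤 = 𝔥 ⊕ 𝔪, [𝔥,𝔪] ⊆ 𝔪, [𝔪,𝔪] ⊆ 𝔥), and ad(h)|𝔪 is
nilpotent of index exactly 3 (null isotropy). -/
theorem L48_null_isotropy (L : Type*) [LieRing L] [LieAlgebra ℝ L]
    (e : Module.Basis (Fin 4) ℝ L)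
    (h23 : ⁅e 1, e 2⁆ = e 0) (h24 : ⁅e 1, e 3⁆ = e 1) (h34 : ⁅e 2, e 3⁆ = -e 2)
    (h12 : ⁅e 0, e 1⁆ = 0) (h13 : ⁅e 0, e 2⁆ = 0) (h14 : ⁅e 0, e 3⁆ = 0)
    (h : L) (hh : h = e 1 + e 2)
    (H M : Submodule ℝ L)
    (hH : H = Submodule.span ℝ {h})
    (hM : M = Submodule.span ℝ {e 3, e 1 - e 2, (2 : ℝ) • e 0}) :
    (∀ x ∈ H, ∀ y ∈ H, ⁅x, y⁆ ∈ H) ∧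
    H ⊔ M = ⊤ ∧ H ⊓ M = ⊥ ∧
    (∀ x ∈ H, ∀ y ∈ M, ⁅x, y⁆ ∈ M) ∧
    (∀ x ∈ M, ∀ y ∈ M, ⁅x, y⁆ ∈ H) ∧
    (∀ m ∈ M, ⁅h, ⁅h, ⁅h, m⁆⁆⁆ = 0) ∧
    (∃ m ∈ M, ⁅h, ⁅h, m⁆⁆ ≠ 0) := by
  -- skew-symmetric versions of the brackets
  have h32 : ⁅e 2, e 1⁆ = -e 0 := by rw [← lie_skew, h23]
  have h42 : ⁅e 3, e 1⁆ = -e 1 := by rw [← lie_skew, h24]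
  have h43 : ⁅e 3, e 2⁆ = e 2 := by rw [← lie_skew, h34, neg_neg]
  have h21 : ⁅e 1, e 0⁆ = 0 := by rw [← lie_skew, h12, neg_zero]
  have h31 : ⁅e 2, e 0⁆ = 0 := by rw [← lie_skew, h13, neg_zero]
  have h41 : ⁅e 3, e 0⁆ = 0 := by rw [← lie_skew, h14, neg_zero]
  -- key bracket computations with h
  have bh3 : ⁅h, e 3⁆ = e 1 - e 2 := by
    rw [hh, add_lie, h24, h34]; abel
  have bh12 : ⁅h, e 1 - e 2⁆ = -((2 : ℝ) • e 0) := by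
    rw [hh, add_lie, lie_sub, lie_sub, lie_self, lie_self, h23, h32, two_smul]
    abel
  have bh0 : ⁅h, (2 : ℝ) • e 0⁆ = 0 := by
    rw [hh, lie_smul, add_lie, h21, h31, add_zero, smul_zero]
  -- membership of generators
  have hmemh : h ∈ H := by rw [hH]; exact Submodule.mem_span_singleton_self h
  have hm3 : e 3 ∈ M := by
    rw [hM]; exact Submodule.subset_span (by simp)
  have hm12 : e 1 - e 2 ∈ M := by
    rw [hM]; exact Submodule.subset_span (by simp)
  have hm0 : (2 : ℝ) • e 0 ∈ M := by
    rw [hM]; exact Submodule.subset_span (by simp)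
  -- [h, M] ⊆ M
  have adhM : ∀ y ∈ M, ⁅h, y⁆ ∈ M := by
    intro y hy
    rw [hM] at hy
    induction hy using Submodule.span_induction with
    | mem x hx =>
      rcases hx with rfl | rfl | rfl
      · rw [bh3]; exact hm12
      · rw [bh12]; exact M.neg_mem hm0
      · rw [bh0]; exact M.zero_mem
    | zero => rw [lie_zero]; exact M.zero_mem
    | add x y hx hy ihx ihy => rw [lie_add]; exact M.add_mem ihx ihy
    | smul a x hx ihx => rw [lie_smul]; exact M.smul_mem a ihx
  refine ⟨?_, ?_, ?_, ?_, ?_, ?_, ?_⟩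
  · -- H is a subalgebra
    intro x hx y hy
    rw [hH] at hx hy ⊢
    rcases Submodule.mem_span_singleton.mp hx with ⟨c, rfl⟩
    rcases Submodule.mem_span_singleton.mp hy with ⟨d, rfl⟩
    rw [smul_lie, lie_smul, lie_self, smul_zero, smul_zero]
    exact Submodule.zero_mem _
  · -- H ⊔ M = ⊤
    rw [← top_le_iff, ← e.span_eq, Submodule.span_le]
    rintro x ⟨i, rfl⟩
    have hmemh' : h ∈ H ⊔ M := Submodule.mem_sup_left hmemh
    have hm3' : e 3 ∈ H ⊔ M := Submodule.mem_sup_right hm3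
    have hm12' : e 1 - e 2 ∈ H ⊔ M := Submodule.mem_sup_right hm12
    have hm0' : (2 : ℝ) • e 0 ∈ H ⊔ M := Submodule.mem_sup_right hm0
    fin_cases i
    · show e 0 ∈ H ⊔ M
      have : e 0 = (1 / 2 : ℝ) • ((2 : ℝ) • e 0) := by
        rw [smul_smul]; norm_num
      rw [this]; exact Submodule.smul_mem _ _ hm0'
    · show e 1 ∈ H ⊔ M
      have : e 1 = (1 / 2 : ℝ) • (h + (e 1 - e 2)) := by
        rw [hh]; module
      rw [this]
      exact Submodule.smul_mem _ _ (Submodule.add_mem _ hmemh' hm12')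
    · show e 2 ∈ H ⊔ M
      have : e 2 = (1 / 2 : ℝ) • (h - (e 1 - e 2)) := by
        rw [hh]; module
      rw [this]
      exact Submodule.smul_mem _ _ (Submodule.sub_mem _ hmemh' hm12')
    · show e 3 ∈ H ⊔ M
      exact hm3'
  · -- H ⊓ M = ⊥
    rw [eq_bot_iff]
    rintro x ⟨hxH, hxM⟩
    rw [hH] at hxH
    rcases Submodule.mem_span_singleton.mp hxH with ⟨c, rfl⟩
    have hf : M ≤ LinearMap.ker (e.coord 1 + e.coord 2) := by
      rw [hM, Submodule.span_le]
      rintro x (rfl | rfl | rfl) <;>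
        simp [LinearMap.mem_ker, Module.Basis.coord_apply, map_sub, Finsupp.single_apply]
    have h0 : (e.coord 1 + e.coord 2) (c • h) = 0 := hf hxM
    have h2 : (e.coord 1 + e.coord 2) (c • h) = 2 * c := by
      rw [hh]
      simp [Module.Basis.coord_apply, Finsupp.single_apply]
      ring
    rw [h2] at h0
    have : c = 0 := by linarith
    rw [this, zero_smul]
    exact Submodule.zero_mem _
  · -- [H, M] ⊆ M
    intro x hx y hy
    rw [hH] at hx
    rcases Submodule.mem_span_singleton.mp hx with ⟨c, rfl⟩
    rw [smul_lie]
    exact M.smul_mem c (adhM y hy)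
  · -- [M, M] ⊆ H
    intro x hx y hy
    rw [hM] at hx hy
    induction hx using Submodule.span_induction with
    | mem x hx =>
      induction hy using Submodule.span_induction with
      | mem y hy =>
        rcases hx with rfl | rfl | rfl <;> rcases hy with rfl | rfl | rfl
        · rw [lie_self]; exact H.zero_mem
        · have : ⁅e 3, e 1 - e 2⁆ = -h := by
            rw [lie_sub, h42, h43, hh]; abel
          rw [this]; exact H.neg_mem hmemh
        · rw [lie_smul, h41, smul_zero]; exact H.zero_mem
        · have : ⁅e 1 - e 2, e 3⁆ = h := by
            rw [sub_lie, h24, h34, hh]; abel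
          rw [this]; exact hmemh
        · rw [lie_self]; exact H.zero_mem
        · rw [lie_smul, sub_lie, h21, h31, sub_zero, smul_zero]; exact H.zero_mem
        · rw [smul_lie, h14, smul_zero]; exact H.zero_mem
        · rw [smul_lie, lie_sub, h12, h13, sub_zero, smul_zero]; exact H.zero_mem
        · rw [lie_self]; exact H.zero_mem
      | zero => rw [lie_zero]; exact H.zero_mem
      | add y z hy hz ihy ihz => rw [lie_add]; exact H.add_mem ihy ihz
      | smul a y hy ihy => rw [lie_smul]; exact H.smul_mem a ihy
    | zero => rw [zero_lie]; exact H.zero_mem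
    | add x y hx' hy' ihx ihy => rw [add_lie]; exact H.add_mem ihx ihy
    | smul a x hx' ihx => rw [smul_lie]; exact H.smul_mem a ihx
  · -- (ad h)^3 = 0 on M
    intro m hm
    rw [hM] at hm
    induction hm using Submodule.span_induction with
    | mem x hx =>
      rcases hx with rfl | rfl | rfl
      · rw [bh3, bh12, lie_neg, bh0, neg_zero]
      · rw [bh12, lie_neg, bh0, neg_zero, lie_zero]
      · rw [bh0, lie_zero, lie_zero]
    | zero => rw [lie_zero, lie_zero, lie_zero]
    | add x y hx hy ihx ihy => rw [lie_add, lie_add, lie_add, ihx, ihy, add_zero]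
    | smul a x hx ihx => rw [lie_smul, lie_smul, lie_smul, ihx, smul_zero]
  · -- index exactly 3
    refine ⟨e 3, hm3, ?_⟩
    rw [bh3, bh12]
    intro hcon
    have h0 : (2 : ℝ) • e 0 = 0 := by
      have := neg_eq_zero.mp hcon
      exact this
    have : e 0 = 0 := by
      rcases smul_eq_zero.mp h0 with hc | hc
      · norm_num at hc
      · exact hc
    exact e.ne_zero 0 this
end

section
/- Let 𝔤 be the Lie algebra L(3,5) = sl(2,ℝ) with brackets [e₁,e₂] = e₁, [e₁,e₃] = −2e₂, [e₂,e₃] = e₃, let h = ½(e₁−e₃) and 𝔪 = span{m₁, m₂} where m₁ = ½(e₁+e₃), m₂ = e₂. Then the symmetric bilinear forms B on 𝔪 satisfying B([h,u],v) + B(u,[h,v]) = 0 for all u,v ∈ 𝔪 form a one-dimensional space spanned by the form making m₁, m₂ orthonormal; in particular this Lie algebra pair admits an ad𝔥-invariant positive-definite inner product on 𝔪 (a Riemannian isotropy case missing from Petrov's G₃-on-V₂ list). -/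
open Matrix

/-- In L(3,5) = sl(2,ℝ) with brackets [e₁,e₂]=e₁, [e₁,e₃]=−2e₂, [e₂,e₃]=e₃, for
h = ½(e₁−e₃) and 𝔪 with ordered basis m = (½(e₁+e₃), e₂), the ad𝔥-invariant
symmetric bilinear forms on 𝔪 — given in coordinates by symmetric matrices M with
Aᵀ·M + M·A = 0, where A is the matrix of ad(h)|𝔪 in the basis m — form a
one-dimensional space spanned by the identity matrix (the form making m₁,m₂
orthonormal), which is positive definite: this Lie algebra pair admits an
ad𝔥-invariant Riemannian inner product (missing from Petrov's G₃-on-V₂ list). -/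
theorem L35_riemannian_isotropy (L : Type*) [LieRing L] [LieAlgebra ℝ L]
    (e : Module.Basis (Fin 3) ℝ L)
    (h12 : ⁅e 0, e 1⁆ = e 0) (h13 : ⁅e 0, e 2⁆ = (-2 : ℝ) • e 1)
    (h23 : ⁅e 1, e 2⁆ = e 2)
    (h : L) (hh : h = (1/2 : ℝ) • (e 0 - e 2))
    (m : Fin 2 → L) (hm : m = ![(1/2 : ℝ) • (e 0 + e 2), e 1])
    (A : Matrix (Fin 2) (Fin 2) ℝ)
    (hA : ∀ i, ⁅h, m i⁆ = ∑ j, A j i • m j) :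
    {M : Matrix (Fin 2) (Fin 2) ℝ | M.IsSymm ∧ Aᵀ * M + M * A = 0}
      = (Submodule.span ℝ ({1} : Set (Matrix (Fin 2) (Fin 2) ℝ))
          : Set (Matrix (Fin 2) (Fin 2) ℝ)) ∧
    (1 : Matrix (Fin 2) (Fin 2) ℝ).PosDef := by
  have h21 : ⁅e 1, e 0⁆ = -(e 0) := by rw [← lie_skew, h12]
  have h31 : ⁅e 2, e 0⁆ = -((-2 : ℝ) • e 1) := by rw [← lie_skew, h13]
  have h32 : ⁅e 2, e 1⁆ = -(e 2) := by rw [← lie_skew, h23]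
  have h0 := hA 0
  have h1 := hA 1
  rw [hm, hh] at h0 h1
  simp only [Fin.sum_univ_two, Matrix.cons_val_zero, Matrix.cons_val_one, Matrix.head_cons,
    lie_add, add_lie, sub_lie, lie_sub, smul_lie, lie_smul, lie_self,
    h12, h13, h23, h21, h31, h32, smul_add, smul_sub, smul_neg, smul_smul] at h0 h1
  have c : ∀ (x y : L), x = y → ∀ i, e.repr x i = e.repr y i := by
    intro x y hxy i; rw [hxy]
  have c00 := c _ _ h0 0
  have c01 := c _ _ h0 1
  have c02 := c _ _ h0 2
  have c10 := c _ _ h1 0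
  have c11 := c _ _ h1 1
  have c12 := c _ _ h1 2
  simp [Finsupp.single_apply] at c00 c01 c02 c10 c11 c12
  have hAval : A = !![0, 1; -1, 0] := by
    ext i j
    fin_cases i <;> fin_cases j <;>
      simp [Matrix.cons_val_zero, Matrix.cons_val_one] <;> linarith
  subst hAval
  have hT : (!![0, 1; -1, 0]ᵀ : Matrix (Fin 2) (Fin 2) ℝ) = -(!![0, 1; -1, 0]) := by
    ext i j
    fin_cases i <;> fin_cases j <;> simp
  constructor
  · ext M
    simp only [Set.mem_setOf_eq, SetLike.mem_coe, Submodule.mem_span_singleton]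
    constructor
    · rintro ⟨hsym, hcomm⟩
      rw [hT] at hcomm
      have e01 : M 1 0 = M 0 1 := by
        have := congrFun (congrFun hsym 0) 1
        simpa [Matrix.IsSymm, Matrix.transpose_apply] using this
      have q00 := congrFun (congrFun hcomm 0) 0
      have q01 := congrFun (congrFun hcomm 0) 1
      have q10 := congrFun (congrFun hcomm 1) 0
      have q11 := congrFun (congrFun hcomm 1) 1
      simp [Matrix.mul_apply, Matrix.add_apply, Matrix.neg_apply, Matrix.vecMul,
        dotProduct, Fin.sum_univ_two] at q00 q01 q10 q11
      refine ⟨M 0 0, ?_⟩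
      ext i j
      fin_cases i <;> fin_cases j <;>
        simp [Matrix.smul_apply, Matrix.one_apply] <;> linarith
    · rintro ⟨a, rfl⟩
      refine ⟨by simp [Matrix.IsSymm], ?_⟩
      rw [hT]
      simp only [Matrix.neg_mul, Matrix.mul_smul, Matrix.smul_mul, Matrix.mul_one,
        Matrix.one_mul, smul_neg]
      exact neg_add_cancel _
  · exact Matrix.PosDef.one
end
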